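/- arXiv:2105.02035 — 4 statements merged into one kernel-verified Lean document; each statement's English description precedes it below -/
import Mathlib

section
/- Let V₀, V₁ : X → [1, ∞) be functions and define the bivariate function V(θ₀, θ₁) := (V₀(θ₀) + V₁(θ₁))/2 on X × X. Suppose P is an operator on bounded measurable functions of X × X such that for functions of one coordinate, (P(V_j ∘ proj_j))(θ₀,θ₁) = (P_j V_j)(θ_j), where each marginal operator P_j satisfies the drift condition (P_j V_j)(θ) ≤ λ V_j(θ) + κ·1_{θ ∈ K} for some λ ∈ (0,1), κ ≥ 0, and set K ⊆ X. Further suppose V_j takes values in [1, Γ] with V_j = Γ on K^c, and that Λ := λ + κ/(1+Γ) < 1. Then for all (θ₀,θ₁) ∈ X × X: (i) if θ₀ ∉ K and θ₁ ∉ K, then (PV)(θ₀,θ₁) ≤ Λ V(θ₀,θ₁); (ii) if exactly one of θ₀, θ₁ lies in K, then (PV)(θ₀,θ₁) ≤ Λ V(θ₀,θ₁); (iii) if both θ₀, θ₁ ∈ K, then (PV)(θ₀,θ₁) ≤ Λ V(θ₀,θ₁) + κΓ/(1+Γ). In particular, P satisfies a drift condition with Lyapunov function V, small set K × K, drift constant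 Λ < 1, and additive constant κ̃ = κΓ/(1+Γ). -/
open Classical in

/-- Drift condition for the coupled chain, from drift conditions for the marginals.
`P` is a linear, positivity-preserving (Markov) operator on functions of `X × X`
which respects the marginals: on functions of one coordinate it acts as the marginal
operator `P_j`. -/
theorem coupled_drift_condition {X : Type*}
    (P : (X × X → ℝ) → (X × X → ℝ))
    (hPadd : ∀ f g : X × X → ℝ, P (f + g) = P f + P g)
    (hPsmul : ∀ (c : ℝ) (f : X × X → ℝ), P (c • f) = c • P f)
    (P₀ P₁ : (X → ℝ) → (X → ℝ))
    (V₀ V₁ : X → ℝ) (hV₀ : ∀ θ, 1 ≤ V₀ θ) (hV₁ : ∀ θ, 1 ≤ V₁ θ)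
    (hmarg₀ : ∀ θ : X × X, P (fun p => V₀ p.1) θ = P₀ V₀ θ.1)
    (hmarg₁ : ∀ θ : X × X, P (fun p => V₁ p.2) θ = P₁ V₁ θ.2)
    (lam κ Γ : ℝ) (hlam : lam ∈ Set.Ioo (0:ℝ) 1) (hκ : 0 ≤ κ) (hΓ : 1 < Γ)
    (K : Set X)
    (hdrift₀ : ∀ θ, P₀ V₀ θ ≤ lam * V₀ θ + κ * (if θ ∈ K then 1 else 0))
    (hdrift₁ : ∀ θ, P₁ V₁ θ ≤ lam * V₁ θ + κ * (if θ ∈ K then 1 else 0))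
    (hV₀Γ : ∀ θ, V₀ θ ≤ Γ) (hV₁Γ : ∀ θ, V₁ θ ≤ Γ)
    (hV₀c : ∀ θ ∉ K, V₀ θ = Γ) (hV₁c : ∀ θ ∉ K, V₁ θ = Γ)
    (hΛ : lam + κ / (1 + Γ) < 1) :
    (∀ θ : X × X, θ.1 ∉ K → θ.2 ∉ K →
        P (fun p => (V₀ p.1 + V₁ p.2) / 2) θ
          ≤ (lam + κ / (1 + Γ)) * ((V₀ θ.1 + V₁ θ.2) / 2)) ∧
    (∀ θ : X × X, (θ.1 ∈ K ∧ θ.2 ∉ K) ∨ (θ.1 ∉ K ∧ θ.2 ∈ K) →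
        P (fun p => (V₀ p.1 + V₁ p.2) / 2) θ
          ≤ (lam + κ / (1 + Γ)) * ((V₀ θ.1 + V₁ θ.2) / 2)) ∧
    (∀ θ : X × X, θ.1 ∈ K → θ.2 ∈ K →
        P (fun p => (V₀ p.1 + V₁ p.2) / 2) θ
          ≤ (lam + κ / (1 + Γ)) * ((V₀ θ.1 + V₁ θ.2) / 2) + κ * Γ / (1 + Γ)) ∧
    (∀ θ : X × X,
        P (fun p => (V₀ p.1 + V₁ p.2) / 2) θ
          ≤ (lam + κ / (1 + Γ)) * ((V₀ θ.1 + V₁ θ.2) / 2)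
            + (κ * Γ / (1 + Γ)) * (if θ ∈ K ×ˢ K then 1 else 0)) := by

  obtain ⟨hlam0, hlam1⟩ := hlam
  have hΓ0 : (0:ℝ) < 1 + Γ := by linarith
  have key : ∀ θ : X × X, P (fun p => (V₀ p.1 + V₁ p.2) / 2) θ
      = (P₀ V₀ θ.1 + P₁ V₁ θ.2) / 2 := by
    intro θ
    have heq : (fun p : X × X => (V₀ p.1 + V₁ p.2) / 2)
        = (1/2 : ℝ) • ((fun p : X × X => V₀ p.1) + (fun p : X × X => V₁ p.2)) := by
      funext p; simp [Pi.smul_apply]; ring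
    rw [heq, hPsmul, hPadd]
    simp only [Pi.smul_apply, Pi.add_apply, hmarg₀ θ, hmarg₁ θ, smul_eq_mul]
    ring
  have bound : ∀ θ : X × X, P (fun p => (V₀ p.1 + V₁ p.2) / 2) θ
      ≤ lam * ((V₀ θ.1 + V₁ θ.2) / 2)
        + κ * ((if θ.1 ∈ K then 1 else 0) + (if θ.2 ∈ K then 1 else 0)) / 2 := by
    intro θ
    rw [key θ]
    have h0 := hdrift₀ θ.1
    have h1 := hdrift₁ θ.2
    linarith
  have case1 : ∀ θ : X × X, θ.1 ∉ K → θ.2 ∉ K →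
      P (fun p => (V₀ p.1 + V₁ p.2) / 2) θ
        ≤ (lam + κ / (1 + Γ)) * ((V₀ θ.1 + V₁ θ.2) / 2) := by
    intro θ h1 h2
    have hb := bound θ
    simp only [if_neg h1, if_neg h2] at hb
    have hVpos : (0:ℝ) ≤ (V₀ θ.1 + V₁ θ.2) / 2 := by
      have := hV₀ θ.1; have := hV₁ θ.2; linarith
    have hκΓ : 0 ≤ κ / (1 + Γ) := div_nonneg hκ hΓ0.le
    nlinarith
  have case2 : ∀ θ : X × X, (θ.1 ∈ K ∧ θ.2 ∉ K) ∨ (θ.1 ∉ K ∧ θ.2 ∈ K) →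
      P (fun p => (V₀ p.1 + V₁ p.2) / 2) θ
        ≤ (lam + κ / (1 + Γ)) * ((V₀ θ.1 + V₁ θ.2) / 2) := by
    intro θ h
    have hb := bound θ
    have hV : 1 + Γ ≤ V₀ θ.1 + V₁ θ.2 := by
      rcases h with ⟨h1, h2⟩ | ⟨h1, h2⟩
      · have := hV₁c θ.2 h2; have := hV₀ θ.1; linarith
      · have := hV₀c θ.1 h1; have := hV₁ θ.2; linarith
    have hind : ((if θ.1 ∈ K then (1:ℝ) else 0) + (if θ.2 ∈ K then 1 else 0)) = 1 := by
      rcases h with ⟨h1, h2⟩ | ⟨h1, h2⟩ <;> simp [h1, h2]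
    rw [hind] at hb
    have hκhalf : κ / 2 ≤ κ / (1 + Γ) * ((V₀ θ.1 + V₁ θ.2) / 2) := by
      rw [div_mul_eq_mul_div, div_le_div_iff₀ (by norm_num) hΓ0]
      nlinarith
    linarith
  have case3 : ∀ θ : X × X, θ.1 ∈ K → θ.2 ∈ K →
      P (fun p => (V₀ p.1 + V₁ p.2) / 2) θ
        ≤ (lam + κ / (1 + Γ)) * ((V₀ θ.1 + V₁ θ.2) / 2) + κ * Γ / (1 + Γ) := by
    intro θ h1 h2
    have hb := bound θ
    simp only [if_pos h1, if_pos h2] at hb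
    have hV : 2 ≤ V₀ θ.1 + V₁ θ.2 := by
      have := hV₀ θ.1; have := hV₁ θ.2; linarith
    have hκle : κ ≤ κ / (1 + Γ) * ((V₀ θ.1 + V₁ θ.2) / 2) + κ * Γ / (1 + Γ) := by
      rw [div_mul_eq_mul_div, ← add_div, le_div_iff₀ hΓ0]
      nlinarith
    linarith
  refine ⟨case1, case2, case3, fun θ => ?_⟩
  by_cases h : θ ∈ K ×ˢ K
  · obtain ⟨h1, h2⟩ := h
    simpa [h1, h2] using case3 θ h1 h2
  · rw [if_neg h, mul_zero, add_zero]
    rw [Set.mem_prod, not_and_or] at h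
    by_cases h1 : θ.1 ∈ K
    · exact case2 θ (Or.inl ⟨h1, h.resolve_left (not_not_intro h1)⟩)
    · by_cases h2 : θ.2 ∈ K
      · exact case2 θ (Or.inr ⟨h1, h2⟩)
      · exact case1 θ h1 h2
end

section
/- Let (X, ℬ, μ) be a probability space, Q, π : X → (0,∞) measurable probability densities with respect to μ, and ε > 0. Suppose A ⊆ X is measurable with ∫_A Q dμ > 1 - ε and ∫_A 1 dμ arbitrary, and suppose Q(θ)/π(θ) > Q(z)/π(z) for all θ ∈ A^c and z ∈ A. Define the Independence Metropolis–Hastings kernel p(θ, B) := ∫_B α(θ,z) Q(z) dμ(z) + 1_{θ ∈ B}(1 - ∫_X α(θ,z) Q(z) dμ(z)) where α(θ,z) = min(1, Q(θ)π(z)/(Q(z)π(θ))). Then p(θ, A^c) ≤ 2ε for every θ ∈ X. -/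
open MeasureTheory

/-- Uniform tightness estimate for the Independence Metropolis–Hastings kernel:
if `A` carries `Q`-mass at least `1-ε` and the ratio `Q/π` is larger outside `A`
than inside, then `p(θ, Aᶜ) ≤ 2ε` uniformly in `θ`. -/
theorem imh_kernel_tail_bound {X : Type*} [MeasurableSpace X]
    (μ : Measure X) [IsProbabilityMeasure μ]
    (Q π : X → ℝ) (hQmeas : Measurable Q) (hπmeas : Measurable π)
    (hQpos : ∀ z, 0 < Q z) (hπpos : ∀ z, 0 < π z)
    (hQint : ∫ z, Q z ∂μ = 1) (hπint : ∫ z, π z ∂μ = 1)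
    (ε : ℝ) (hε : 0 < ε)
    (A : Set X) (hA : MeasurableSet A)
    (hAmass : 1 - ε < ∫ z in A, Q z ∂μ)
    (hratio : ∀ θ ∉ A, ∀ z ∈ A, Q z / π z < Q θ / π θ) :
    ∀ θ : X,
      (∫ z in Aᶜ, min 1 ((Q θ * π z) / (Q z * π θ)) * Q z ∂μ)
        + Set.indicator Aᶜ
            (fun _ => 1 - ∫ z, min 1 ((Q θ * π z) / (Q z * π θ)) * Q z ∂μ) θ
      ≤ 2 * ε := by
  intro θ
  set f : X → ℝ := fun z => min 1 ((Q θ * π z) / (Q z * π θ)) * Q z with hf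
  have hQintg : Integrable Q μ := by
    by_contra h
    rw [integral_undef h] at hQint
    norm_num at hQint
  have hfnonneg : ∀ z, 0 ≤ f z := fun z =>
    mul_nonneg (le_min zero_le_one
      (div_nonneg (mul_nonneg (hQpos θ).le (hπpos z).le)
        (mul_nonneg (hQpos z).le (hπpos θ).le))) (hQpos z).le
  have hfle : ∀ z, f z ≤ Q z := fun z => by
    calc f z ≤ 1 * Q z := mul_le_mul_of_nonneg_right (min_le_left _ _) (hQpos z).le
    _ = Q z := one_mul _
  have hfmeas : Measurable f := by
    apply Measurable.mul _ hQmeas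
    exact (measurable_const.min (((measurable_const.mul hπmeas).div
      (hQmeas.mul measurable_const))))
  have hfintg : Integrable f μ :=
    Integrable.mono' hQintg hfmeas.aestronglyMeasurable
      (Filter.Eventually.of_forall fun z => by
        rw [Real.norm_eq_abs, abs_of_nonneg (hfnonneg z)]; exact hfle z)
  have hQA : ∫ z in A, Q z ∂μ ≤ 1 := by
    rw [← hQint]
    exact setIntegral_le_integral hQintg
      (Filter.Eventually.of_forall fun z => (hQpos z).le)
  -- first term
  have h1 : ∫ z in Aᶜ, f z ∂μ ≤ ε := by
    have hsplit : ∫ z in A, Q z ∂μ + ∫ z in Aᶜ, Q z ∂μ = 1 := by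
      rw [← hQint]
      exact (integral_add_compl hA hQintg)
    have hle : ∫ z in Aᶜ, f z ∂μ ≤ ∫ z in Aᶜ, Q z ∂μ :=
      setIntegral_mono_on hfintg.integrableOn hQintg.integrableOn hA.compl
        fun z _ => hfle z
    linarith
  -- second term
  by_cases hθ : θ ∈ A
  · have : θ ∉ Aᶜ := fun h => h hθ
    rw [Set.indicator_of_notMem this]
    have : 0 ≤ ε := hε.le
    linarith
  · rw [Set.indicator_of_mem (by exact hθ : θ ∈ Aᶜ)]
    have hfeq : ∀ z ∈ A, f z = Q z := by
      intro z hz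
      have hr := hratio θ hθ z hz
      have h1' : (1:ℝ) ≤ (Q θ * π z) / (Q z * π θ) := by
        rw [le_div_iff₀ (mul_pos (hQpos z) (hπpos θ)), one_mul]
        rw [div_lt_div_iff₀ (hπpos z) (hπpos θ)] at hr
        nlinarith [hπpos z, hπpos θ]
      simp [hf, min_eq_left h1']
    have hAf : ∫ z in A, f z ∂μ = ∫ z in A, Q z ∂μ :=
      setIntegral_congr_fun hA hfeq
    have hge : ∫ z in A, Q z ∂μ ≤ ∫ z, f z ∂μ := by
      rw [← hAf]
      exact setIntegral_le_integral hfintg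
        (Filter.Eventually.of_forall hfnonneg)
    linarith
end

section
/- Let (X, ℬ, μ) be a probability space and let α₀, α₁ : X × X → [0,1] and Q : X → [0,∞) be measurable with ∫ Q dμ = 1. Define the coupled kernel's 'both-accept' part by P(θ₀,θ₁; B) ≥ ∫_X min(α₀(θ₀,z), α₁(θ₁,z)) Q(z) 1_{(z,z) ∈ B} dμ(z) for B ⊆ X × X measurable. Suppose there exist constants ε, ε′, ε″ > 0 and a set K ⊆ X such that Q(z) ≥ ε, π₀(z) ≥ ε′, π₁(z) ≥ ε″ for all z ∈ K, where α_j(θ,z) = min(1, Q(θ)π_j(z)/(Q(z)π_j(θ))) with π_j > 0 everywhere. Then for every (θ₀,θ₁) ∈ X × X and every measurable B, P(θ₀,θ₁; B) ≥ c(θ₀,θ₁) · μ({z ∈ K : (z,z) ∈ B}), where c(θ₀,θ₁) := min( ε, ε′ Q(θ₀)/π₀(θ₀), ε″ Q(θ₁)/π₁(θ₁) ) > 0. -/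
open MeasureTheory

/-- Quantitative positivity (ψ-irreducibility) bound for the coupled Independence
Metropolis–Hastings kernel: the joint kernel is bounded below by a positive multiple
of the reference mass of the diagonal slice of `B` restricted to `K`. -/
theorem coupled_kernel_irreducibility_bound {X : Type*} [MeasurableSpace X]
    (μ : Measure X) [IsProbabilityMeasure μ]
    (Q π₀ π₁ : X → ℝ) (hQmeas : Measurable Q) (hπ₀meas : Measurable π₀)
    (hπ₁meas : Measurable π₁)
    (hQpos : ∀ z, 0 < Q z) (hπ₀pos : ∀ z, 0 < π₀ z) (hπ₁pos : ∀ z, 0 < π₁ z)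
    (hQint : ∫ z, Q z ∂μ = 1)
    (P : X → X → Set (X × X) → ℝ)
    (hP : ∀ (θ₀ θ₁ : X) (B : Set (X × X)), MeasurableSet B →
      P θ₀ θ₁ B ≥ ∫ z,
        min (min 1 ((Q θ₀ * π₀ z) / (Q z * π₀ θ₀)))
            (min 1 ((Q θ₁ * π₁ z) / (Q z * π₁ θ₁))) * Q z
          * Set.indicator {z : X | (z, z) ∈ B} (fun _ => (1:ℝ)) z ∂μ)
    (ε ε' ε'' : ℝ) (hε : 0 < ε) (hε' : 0 < ε') (hε'' : 0 < ε'')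
    (K : Set X) (hK : MeasurableSet K)
    (hQK : ∀ z ∈ K, ε ≤ Q z) (hπ₀K : ∀ z ∈ K, ε' ≤ π₀ z) (hπ₁K : ∀ z ∈ K, ε'' ≤ π₁ z) :
    ∀ (θ₀ θ₁ : X) (B : Set (X × X)), MeasurableSet B →
      0 < min ε (min (ε' * Q θ₀ / π₀ θ₀) (ε'' * Q θ₁ / π₁ θ₁)) ∧
      P θ₀ θ₁ B ≥ min ε (min (ε' * Q θ₀ / π₀ θ₀) (ε'' * Q θ₁ / π₁ θ₁))
        * (μ (K ∩ {z : X | (z, z) ∈ B})).toReal := by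

  intro θ₀ θ₁ B hB
  set c := min ε (min (ε' * Q θ₀ / π₀ θ₀) (ε'' * Q θ₁ / π₁ θ₁)) with hc
  have hcpos : 0 < c := by
    refine lt_min hε (lt_min ?_ ?_)
    · exact div_pos (mul_pos hε' (hQpos θ₀)) (hπ₀pos θ₀)
    · exact div_pos (mul_pos hε'' (hQpos θ₁)) (hπ₁pos θ₁)
  refine ⟨hcpos, ?_⟩
  set S : Set X := {z : X | (z, z) ∈ B} with hS
  have hSmeas : MeasurableSet S := (measurable_id.prodMk measurable_id) hB
  set f : X → ℝ := fun z => min (min 1 ((Q θ₀ * π₀ z) / (Q z * π₀ θ₀)))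
            (min 1 ((Q θ₁ * π₁ z) / (Q z * π₁ θ₁))) * Q z
          * Set.indicator S (fun _ => (1:ℝ)) z with hf
  have hind01 : ∀ z, 0 ≤ Set.indicator S (fun _ => (1:ℝ)) z ∧
      Set.indicator S (fun _ => (1:ℝ)) z ≤ 1 := by
    intro z
    by_cases hz : z ∈ S <;> simp [Set.indicator_of_mem, Set.indicator_of_notMem, hz]
  have hminnonneg : ∀ z, 0 ≤ min (min 1 ((Q θ₀ * π₀ z) / (Q z * π₀ θ₀)))
            (min 1 ((Q θ₁ * π₁ z) / (Q z * π₁ θ₁))) := by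
    intro z
    refine le_min (le_min one_pos.le ?_) (le_min one_pos.le ?_)
    · exact div_nonneg (mul_nonneg (hQpos θ₀).le (hπ₀pos z).le)
        (mul_nonneg (hQpos z).le (hπ₀pos θ₀).le)
    · exact div_nonneg (mul_nonneg (hQpos θ₁).le (hπ₁pos z).le)
        (mul_nonneg (hQpos z).le (hπ₁pos θ₁).le)
  have hminle1 : ∀ z, min (min 1 ((Q θ₀ * π₀ z) / (Q z * π₀ θ₀)))
            (min 1 ((Q θ₁ * π₁ z) / (Q z * π₁ θ₁))) ≤ 1 :=
    fun z => (min_le_left _ _).trans (min_le_left _ _)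
  have hfnonneg : ∀ z, 0 ≤ f z := by
    intro z
    exact mul_nonneg (mul_nonneg (hminnonneg z) (hQpos z).le) (hind01 z).1
  have hfmeas : Measurable f := by
    apply Measurable.mul
    · apply Measurable.mul
      · exact Measurable.min
          (Measurable.min measurable_const
            ((measurable_const.mul hπ₀meas).div (hQmeas.mul measurable_const)))
          (Measurable.min measurable_const
            ((measurable_const.mul hπ₁meas).div (hQmeas.mul measurable_const)))
      · exact hQmeas
    · exact (measurable_const.indicator hSmeas)
  have hQint' : Integrable Q μ := by
    by_contra h
    rw [integral_undef h] at hQint; norm_num at hQint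
  have hfint : Integrable f μ := by
    refine hQint'.mono' hfmeas.aestronglyMeasurable ?_
    filter_upwards with z
    rw [Real.norm_eq_abs, abs_of_nonneg (hfnonneg z)]
    calc f z ≤ 1 * Q z * 1 := by
          apply mul_le_mul _ (hind01 z).2 (hind01 z).1
          · exact mul_nonneg zero_le_one (hQpos z).le
          · exact mul_le_mul_of_nonneg_right (hminle1 z) (hQpos z).le
      _ = Q z := by ring
  have hgint : Integrable ((K ∩ S).indicator (fun _ => c)) μ := by
    refine (integrable_indicator_iff (hK.inter hSmeas)).2 ?_
    exact integrableOn_const (measure_ne_top μ _) (by simp)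
  have hle : ∀ z, (K ∩ S).indicator (fun _ => c) z ≤ f z := by
    intro z
    by_cases hz : z ∈ K ∩ S
    · rw [Set.indicator_of_mem hz]
      obtain ⟨hzK, hzS⟩ := hz
      rw [hf]
      simp only
      rw [Set.indicator_of_mem hzS, mul_one]
      have h1 : c ≤ min 1 ((Q θ₀ * π₀ z) / (Q z * π₀ θ₀)) * Q z := by
        rw [min_mul_of_nonneg _ _ (hQpos z).le, one_mul]
        refine le_min ((min_le_left _ _).trans (hQK z hzK)) ?_
        have : (Q θ₀ * π₀ z) / (Q z * π₀ θ₀) * Q z = Q θ₀ * π₀ z / π₀ θ₀ := by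
          rw [div_mul_eq_mul_div, mul_comm (Q θ₀ * π₀ z) (Q z),
            mul_div_mul_left _ _ (hQpos z).ne']
        rw [this]
        calc c ≤ ε' * Q θ₀ / π₀ θ₀ := (min_le_right _ _).trans (min_le_left _ _)
          _ ≤ Q θ₀ * π₀ z / π₀ θ₀ := by
              apply div_le_div_of_nonneg_right _ (hπ₀pos θ₀).le
              calc ε' * Q θ₀ = Q θ₀ * ε' := by ring
                _ ≤ Q θ₀ * π₀ z := mul_le_mul_of_nonneg_left (hπ₀K z hzK) (hQpos θ₀).le
      have h2 : c ≤ min 1 ((Q θ₁ * π₁ z) / (Q z * π₁ θ₁)) * Q z := by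
        rw [min_mul_of_nonneg _ _ (hQpos z).le, one_mul]
        refine le_min ((min_le_left _ _).trans (hQK z hzK)) ?_
        have : (Q θ₁ * π₁ z) / (Q z * π₁ θ₁) * Q z = Q θ₁ * π₁ z / π₁ θ₁ := by
          rw [div_mul_eq_mul_div, mul_comm (Q θ₁ * π₁ z) (Q z),
            mul_div_mul_left _ _ (hQpos z).ne']
        rw [this]
        calc c ≤ ε'' * Q θ₁ / π₁ θ₁ := (min_le_right _ _).trans (min_le_right _ _)
          _ ≤ Q θ₁ * π₁ z / π₁ θ₁ := by
              apply div_le_div_of_nonneg_right _ (hπ₁pos θ₁).le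
              calc ε'' * Q θ₁ = Q θ₁ * ε'' := by ring
                _ ≤ Q θ₁ * π₁ z := mul_le_mul_of_nonneg_left (hπ₁K z hzK) (hQpos θ₁).le
      rw [min_mul_of_nonneg _ _ (hQpos z).le]
      exact le_min h1 h2
    · rw [Set.indicator_of_notMem hz]
      exact hfnonneg z
  have key : ∫ z, (K ∩ S).indicator (fun _ => c) z ∂μ ≤ ∫ z, f z ∂μ :=
    integral_mono hgint hfint hle
  have hval : ∫ z, (K ∩ S).indicator (fun _ => c) z ∂μ
      = c * (μ (K ∩ S)).toReal := by
    rw [integral_indicator (hK.inter hSmeas)]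
    simp [Measure.restrict_apply_univ, mul_comm, Measure.real]
  calc P θ₀ θ₁ B ≥ ∫ z, f z ∂μ := hP θ₀ θ₁ B hB
    _ ≥ c * (μ (K ∩ S)).toReal := by rw [← hval]; exact key
end

section
/- Let P be a Markov operator on L_2(X, μ) with invariant probability measure μ and adjoint P*. Suppose the pseudo-spectral gap γ_ps := max_{k ≥ 1} γ₂[(P*)^k P^k]/k is positive, where γ₂[R] := 1 − ‖R‖_{L₂⁰ → L₂⁰} and L₂⁰ is the subspace of mean-zero functions. Then for every g ∈ L₂⁰(X, μ) and every n, m ≥ 0, |⟨P^n g, P^m g⟩_{L₂(μ)}| ≤ ‖g‖²_{L₂(μ)}, and for the chain started in stationarity, the variance of the ergodic average satisfies E_μ |(1/N) Σ_{i=1}^N g(θ_i)|² ≤ (1 + 4/γ_ps) · ‖g‖²_{L₂(μ)} / N. -/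
open scoped RealInnerProductSpace
open Finset

private lemma sum_div_geom' (t : ℝ) (k N : ℕ) (hk : 0 < k) :
    ∑ j ∈ range (k * N), t ^ (j / k) = (k : ℝ) * ∑ q ∈ range N, t ^ q := by
  induction N with
  | zero => simp
  | succ N ih =>
    rw [Nat.mul_succ, Finset.sum_range_add, ih, Finset.sum_range_succ, mul_add]
    congr 1
    rw [Finset.sum_congr rfl (g := fun _ => t ^ N) (by
      intro i hi; simp only [Finset.mem_range] at hi
      rw [Nat.mul_add_div hk, Nat.div_eq_of_lt hi, add_zero])]
    simp [mul_comm]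

/-- Stationary-variance (pseudo-spectral gap) bound. Here `H` plays the role of the
mean-zero subspace `L₂⁰(X, μ)`, `P` is the Markov operator restricted to `H` (a weak
contraction), and the pseudo-spectral gap is
`γ_ps = sup_{k ≥ 1} (1 − ‖(P*)^k P^k‖)/k`. In stationarity the covariance of
`g(θ_n)` and `g(θ_m)` equals `⟪P^{|n−m|} g, g⟫`, so the variance of the ergodic
average `(1/N) Σ g(θ_i)` is the displayed double sum; it is bounded by
`(1 + 4/γ_ps)·‖g‖²/N`. -/
theorem pseudo_spectral_gap_variance_bound {H : Type*} [NormedAddCommGroup H]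
    [InnerProductSpace ℝ H] [CompleteSpace H]
    (P : H →L[ℝ] H) (hP : ‖P‖ ≤ 1)
    (γps : ℝ) (hγpos : 0 < γps)
    (hγ : γps = ⨆ k : ℕ+, (1 - ‖(ContinuousLinearMap.adjoint P) ^ (k : ℕ) * P ^ (k : ℕ)‖) / (k : ℝ)) :
    (∀ (g : H) (n m : ℕ), |⟪(P ^ n) g, (P ^ m) g⟫| ≤ ‖g‖ ^ 2) ∧
    (∀ (g : H) (N : ℕ), 1 ≤ N →
      (1 / (N : ℝ) ^ 2) * ∑ n ∈ range N, ∑ m ∈ range N,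
          ⟪(P ^ (Int.natAbs ((n : ℤ) - (m : ℤ)))) g, g⟫
        ≤ (1 + 4 / γps) * ‖g‖ ^ 2 / N) := by
  have hcontr : ∀ (n : ℕ) (g : H), ‖(P ^ n) g‖ ≤ ‖g‖ := by
    intro n
    induction n with
    | zero => intro g; simp
    | succ n ih =>
      intro g
      rw [pow_succ, ContinuousLinearMap.mul_apply]
      calc ‖(P ^ n) (P g)‖ ≤ ‖P g‖ := ih (P g)
        _ ≤ ‖P‖ * ‖g‖ := P.le_opNorm g
        _ ≤ 1 * ‖g‖ := mul_le_mul_of_nonneg_right hP (norm_nonneg g)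
        _ = ‖g‖ := one_mul _
  constructor
  · intro g n m
    calc |⟪(P ^ n) g, (P ^ m) g⟫| ≤ ‖(P ^ n) g‖ * ‖(P ^ m) g‖ := abs_real_inner_le_norm _ _
      _ ≤ ‖g‖ * ‖g‖ := mul_le_mul (hcontr n g) (hcontr m g) (norm_nonneg _) (norm_nonneg _)
      _ = ‖g‖ ^ 2 := (sq ‖g‖).symm
  set c : ℝ := 2 * γps / (γps + 2) with hc_def
  have hγ2 : (0:ℝ) < γps + 2 := by linarith
  have hc0 : 0 < c := by positivity
  have hclt : c < γps := by
    rw [hc_def, div_lt_iff₀ hγ2]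
    nlinarith
  have hbdd : BddAbove (Set.range fun k : ℕ+ =>
      (1 - ‖(ContinuousLinearMap.adjoint P) ^ (k : ℕ) * P ^ (k : ℕ)‖) / (k : ℝ)) := by
    refine ⟨1, ?_⟩
    rintro x ⟨k, rfl⟩
    have hk1 : (1:ℝ) ≤ (k : ℝ) := by exact_mod_cast k.one_le
    have hn0 : (0:ℝ) ≤ ‖(ContinuousLinearMap.adjoint P) ^ (k : ℕ) * P ^ (k : ℕ)‖ :=
      norm_nonneg _
    calc (1 - ‖(ContinuousLinearMap.adjoint P) ^ (k : ℕ) * P ^ (k : ℕ)‖) / (k : ℝ)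
        ≤ 1 / (k : ℝ) := (div_le_div_iff_of_pos_right (by linarith)).mpr (by linarith)
      _ ≤ 1 := by rw [div_le_one (by linarith)]; exact hk1
  obtain ⟨k, hk⟩ : ∃ k : ℕ+,
      c < (1 - ‖(ContinuousLinearMap.adjoint P) ^ (k : ℕ) * P ^ (k : ℕ)‖) / (k : ℝ) :=
    (lt_ciSup_iff hbdd).mp (hγ ▸ hclt)
  set t : ℝ := ‖P ^ (k : ℕ)‖ with ht_def
  have ht0 : 0 ≤ t := norm_nonneg _
  have ht1 : t ≤ 1 := ContinuousLinearMap.opNorm_le_bound _ zero_le_one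
    (fun g => by rw [one_mul]; exact hcontr _ g)
  have hst : ‖(ContinuousLinearMap.adjoint P) ^ (k : ℕ) * P ^ (k : ℕ)‖ = t * t := by
    rw [← ContinuousLinearMap.star_eq_adjoint, ← star_pow]
    exact CStarRing.norm_star_mul_self
  have hkpos : (0:ℝ) < (k : ℝ) := by exact_mod_cast k.pos
  have hck : c * (k : ℝ) < 1 - t * t := by
    rw [hst] at hk
    calc c * (k : ℝ) < (1 - t * t) / (k : ℝ) * (k : ℝ) := by gcongr
      _ = 1 - t * t := div_mul_cancel₀ _ (ne_of_gt hkpos)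
  have h1t : c * (k : ℝ) / 2 < 1 - t := by nlinarith
  have h1tpos : 0 < 1 - t := lt_of_le_of_lt (by positivity) h1t
  have hiter : ∀ (q : ℕ) (g : H), ‖((P ^ (k : ℕ)) ^ q) g‖ ≤ t ^ q * ‖g‖ := by
    intro q
    induction q with
    | zero => intro g; simp
    | succ q ih =>
      intro g
      rw [pow_succ, ContinuousLinearMap.mul_apply]
      calc ‖((P ^ (k:ℕ)) ^ q) ((P ^ (k:ℕ)) g)‖ ≤ t ^ q * ‖(P ^ (k:ℕ)) g‖ := ih _
        _ ≤ t ^ q * (t * ‖g‖) :=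
            mul_le_mul_of_nonneg_left ((P ^ (k:ℕ)).le_opNorm g) (pow_nonneg ht0 q)
        _ = t ^ (q + 1) * ‖g‖ := by ring
  have hpow : ∀ (j : ℕ) (g : H), ‖(P ^ j) g‖ ≤ t ^ (j / (k : ℕ)) * ‖g‖ := by
    intro j g
    have hdecomp : P ^ j = (P ^ (k:ℕ)) ^ (j / (k:ℕ)) * P ^ (j % (k:ℕ)) := by
      rw [← pow_mul, ← pow_add]
      congr 1
      exact (Nat.div_add_mod j (k:ℕ)).symm
    rw [hdecomp, ContinuousLinearMap.mul_apply]
    calc ‖((P ^ (k:ℕ)) ^ (j / (k:ℕ))) ((P ^ (j % (k:ℕ))) g)‖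
        ≤ t ^ (j / (k:ℕ)) * ‖(P ^ (j % (k:ℕ))) g‖ := hiter _ _
      _ ≤ t ^ (j / (k:ℕ)) * ‖g‖ :=
          mul_le_mul_of_nonneg_left (hcontr _ g) (pow_nonneg ht0 _)
  intro g N hN
  have hinner : ∀ j : ℕ, ⟪(P ^ j) g, g⟫ ≤ t ^ (j / (k : ℕ)) * ‖g‖ ^ 2 := by
    intro j
    calc ⟪(P ^ j) g, g⟫ ≤ ‖(P ^ j) g‖ * ‖g‖ := real_inner_le_norm _ _
      _ ≤ (t ^ (j / (k:ℕ)) * ‖g‖) * ‖g‖ :=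
          mul_le_mul_of_nonneg_right (hpow j g) (norm_nonneg g)
      _ = t ^ (j / (k:ℕ)) * ‖g‖ ^ 2 := by ring
  set f : ℕ → ℝ := fun j => t ^ (j / (k : ℕ)) with hf_def
  have hf0 : ∀ j, 0 ≤ f j := fun j => pow_nonneg ht0 _
  set S : ℝ := ∑ j ∈ range N, f j with hS_def
  have hgeom : ∑ q ∈ range N, t ^ q ≤ 1 / (1 - t) := by
    have hmul : (∑ q ∈ range N, t ^ q) * (1 - t) = 1 - t ^ N := by
      have h := geom_sum_mul t N
      linear_combination -h
    rw [le_div_iff₀ h1tpos, hmul]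
    nlinarith [pow_nonneg ht0 N]
  have hS : S ≤ 2 / c := by
    have hsub : S ≤ ∑ j ∈ range ((k:ℕ) * N), f j := by
      apply Finset.sum_le_sum_of_subset_of_nonneg
      · exact Finset.range_subset_range.mpr (Nat.le_mul_of_pos_left N k.pos)
      · intro j _ _; exact hf0 j
    calc S ≤ ∑ j ∈ range ((k:ℕ) * N), f j := hsub
      _ = (k : ℝ) * ∑ q ∈ range N, t ^ q := sum_div_geom' t (k:ℕ) N k.pos
      _ ≤ (k : ℝ) * (1 / (1 - t)) := mul_le_mul_of_nonneg_left hgeom hkpos.le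
      _ ≤ (k : ℝ) * (1 / (c * (k:ℝ) / 2)) :=
          mul_le_mul_of_nonneg_left
            (one_div_le_one_div_of_le (by positivity) h1t.le) hkpos.le
      _ = 2 / c := by
          rw [one_div, eq_div_iff hc0.ne']
          field_simp
  have h4c : 4 / c = 2 + 4 / γps := by
    rw [hc_def]
    field_simp
    ring
  have hSbound : 2 * S - 1 ≤ 1 + 4 / γps := by
    have h2c : 2 * (2 / c) = 4 / c := by ring
    linarith
  have hrow : ∀ n ∈ range N,
      ∑ m ∈ range N, f (Int.natAbs ((n : ℤ) - (m : ℤ))) ≤ 2 * S - 1 := by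
    intro n hn
    rw [Finset.mem_range] at hn
    have hsplit : ∑ m ∈ range N, f (Int.natAbs ((n : ℤ) - (m : ℤ)))
        = (∑ m ∈ range (n+1), f (Int.natAbs ((n : ℤ) - (m : ℤ))))
          + ∑ m ∈ Ico (n+1) N, f (Int.natAbs ((n : ℤ) - (m : ℤ))) := by
      rw [Finset.range_eq_Ico, ← Finset.sum_Ico_consecutive _ (Nat.zero_le (n+1)) hn, ← Finset.range_eq_Ico]
    have hfirst : ∑ m ∈ range (n+1), f (Int.natAbs ((n : ℤ) - (m : ℤ))) ≤ S := by
      have he : ∑ m ∈ range (n+1), f (Int.natAbs ((n : ℤ) - (m : ℤ)))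
          = ∑ m ∈ range (n+1), f (n - m) := by
        apply Finset.sum_congr rfl
        intro m hm
        rw [Finset.mem_range] at hm
        congr 1
        omega
      rw [he, show (∑ m ∈ range (n+1), f (n - m)) = ∑ j ∈ range (n+1), f j by
        simpa using Finset.sum_range_reflect f (n+1)]
      apply Finset.sum_le_sum_of_subset_of_nonneg
      · exact Finset.range_subset_range.mpr hn
      · intro j _ _; exact hf0 j
    have hsecond : ∑ m ∈ Ico (n+1) N, f (Int.natAbs ((n : ℤ) - (m : ℤ))) ≤ S - 1 := by
      have h1 : ∑ m ∈ Ico (n+1) N, f (Int.natAbs ((n : ℤ) - (m : ℤ)))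
          = ∑ i ∈ range (N - (n+1)), f (i + 1) := by
        rw [Finset.sum_Ico_eq_sum_range]
        apply Finset.sum_congr rfl
        intro i _
        congr 1
        omega
      have h2 : ∑ i ∈ range (N - (n+1)), f (i + 1) ≤ ∑ i ∈ range (N - 1), f (i + 1) := by
        apply Finset.sum_le_sum_of_subset_of_nonneg
        · exact Finset.range_subset_range.mpr (by omega)
        · intro j _ _; exact hf0 _
      have h3 : ∑ i ∈ range (N - 1), f (i + 1) = S - 1 := by
        obtain ⟨M, rfl⟩ : ∃ M, N = M + 1 := ⟨N - 1, by omega⟩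
        simp only [Nat.add_sub_cancel]
        rw [hS_def, Finset.sum_range_succ' f M]
        have hf00 : f 0 = 1 := by simp [hf_def]
        rw [hf00]
        ring
      rw [h1]
      exact le_of_le_of_eq h2 h3
    rw [hsplit]
    linarith
  have hmain : ∑ n ∈ range N, ∑ m ∈ range N,
      ⟪(P ^ (Int.natAbs ((n : ℤ) - (m : ℤ)))) g, g⟫
      ≤ (N : ℝ) * ((1 + 4 / γps) * ‖g‖ ^ 2) := by
    calc ∑ n ∈ range N, ∑ m ∈ range N, ⟪(P ^ (Int.natAbs ((n : ℤ) - (m : ℤ)))) g, g⟫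
        ≤ ∑ n ∈ range N, ∑ m ∈ range N, f (Int.natAbs ((n : ℤ) - (m : ℤ))) * ‖g‖ ^ 2 :=
          Finset.sum_le_sum fun n _ => Finset.sum_le_sum fun m _ => hinner _
      _ = ∑ n ∈ range N, (∑ m ∈ range N, f (Int.natAbs ((n : ℤ) - (m : ℤ)))) * ‖g‖ ^ 2 :=
          Finset.sum_congr rfl fun n _ => (Finset.sum_mul _ _ _).symm
      _ ≤ ∑ n ∈ range N, (2 * S - 1) * ‖g‖ ^ 2 :=
          Finset.sum_le_sum fun n hn =>
            mul_le_mul_of_nonneg_right (hrow n hn) (sq_nonneg _)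
      _ = (N : ℝ) * ((2 * S - 1) * ‖g‖ ^ 2) := by
          rw [Finset.sum_const, Finset.card_range, nsmul_eq_mul]
      _ ≤ (N : ℝ) * ((1 + 4 / γps) * ‖g‖ ^ 2) :=
          mul_le_mul_of_nonneg_left
            (mul_le_mul_of_nonneg_right hSbound (sq_nonneg _)) (Nat.cast_nonneg N)
  have hNpos : (0:ℝ) < (N : ℝ) := by exact_mod_cast hN
  calc (1 / (N : ℝ) ^ 2) * ∑ n ∈ range N, ∑ m ∈ range N,
          ⟪(P ^ (Int.natAbs ((n : ℤ) - (m : ℤ)))) g, g⟫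
      ≤ (1 / (N : ℝ) ^ 2) * ((N : ℝ) * ((1 + 4 / γps) * ‖g‖ ^ 2)) :=
        mul_le_mul_of_nonneg_left hmain (by positivity)
    _ = (1 + 4 / γps) * ‖g‖ ^ 2 / N := by
        field_simp
end
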